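/- There is a constant C = C(d) with the following property. Let h ∈ (0,1] and let G ⊆ ℝ^d be a set such that every x ∈ ℝ^d satisfies dist(x,G) ≤ h. Let f : ℝ^d → ℝ be twice continuously differentiable with bounded Hessian. If f(y) ≥ 0 for all y ∈ G and f(x₀) = 0 for some x₀ ∈ G, then |∇f(x₀)| ≤ C · ( sup_{x ∈ ℝ^d} |D²f(x)| ) · h. -/

import Mathlib

open Metric

noncomputable section

abbrev Euc (d : ℕ) := EuclideanSpace ℝ (Fin d)

/-- if `f` is `C²` with bounded Hessian, nonnegative on a set `G` which
is `h`-dense in `ℝ^d`, and vanishes at some `x₀ ∈ G`, then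
`|∇f(x₀)| ≤ C (sup |D²f|) h` with `C = C(d)`. -/
theorem gradient_bound_at_discrete_min (d : ℕ) (hd : 1 ≤ d) :
    ∃ C : ℝ, 0 < C ∧
      ∀ h : ℝ, h ∈ Set.Ioc (0 : ℝ) 1 →
      ∀ G : Set (Euc d), (∀ x : Euc d, Metric.infDist x G ≤ h) →
      ∀ f : Euc d → ℝ, ContDiff ℝ 2 f →
        (∃ M : ℝ, ∀ x, ‖iteratedFDeriv ℝ 2 f x‖ ≤ M) →
        (∀ y ∈ G, 0 ≤ f y) →
        ∀ x₀ ∈ G, f x₀ = 0 →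
          ‖fderiv ℝ f x₀‖ ≤ C * (⨆ x, ‖iteratedFDeriv ℝ 2 f x‖) * h := by
  refine ⟨18, by norm_num, ?_⟩
  rintro h hh G hG f hf ⟨M0, hM0⟩ hfG x₀ hx₀ hfx₀
  have hhpos : (0 : ℝ) < h := hh.1
  set M := ⨆ x, ‖iteratedFDeriv ℝ 2 f x‖ with hMdef
  have hbdd : BddAbove (Set.range fun x => ‖iteratedFDeriv ℝ 2 f x‖) :=
    ⟨M0, by rintro _ ⟨x, rfl⟩; exact hM0 x⟩
  have hMle : ∀ x, ‖iteratedFDeriv ℝ 2 f x‖ ≤ M := fun x => le_ciSup hbdd x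
  have hMnn : 0 ≤ M := le_trans (norm_nonneg _) (hMle 0)
  have hf1 : ContDiff ℝ 1 (fderiv ℝ f) := hf.fderiv_right (by norm_num)
  have hfd : Differentiable ℝ f := hf.differentiable (by norm_num)
  have hbound2 : ∀ z : Euc d, ‖fderiv ℝ (fderiv ℝ f) z‖ ≤ M := by
    intro z
    have e : ‖fderiv ℝ (fderiv ℝ f) z‖ = ‖iteratedFDeriv ℝ 2 f z‖ :=
      calc ‖fderiv ℝ (fderiv ℝ f) z‖
          = ‖iteratedFDeriv ℝ 0 (fderiv ℝ (fderiv ℝ f)) z‖ := (norm_iteratedFDeriv_zero (f := fderiv ℝ (fderiv ℝ f)) (x := z)).symm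
        _ = ‖iteratedFDeriv ℝ 1 (fderiv ℝ f) z‖ := norm_iteratedFDeriv_fderiv
        _ = ‖iteratedFDeriv ℝ 2 f z‖ := norm_iteratedFDeriv_fderiv
    rw [e]; exact hMle z
  have lip : ∀ z : Euc d, ‖fderiv ℝ f z - fderiv ℝ f x₀‖ ≤ M * ‖z - x₀‖ := by
    intro z
    have := convex_univ.norm_image_sub_le_of_norm_fderiv_le
      (f := fderiv ℝ f) (fun x _ => (hf1.differentiable one_ne_zero).differentiableAt)
      (fun x _ => hbound2 x) (Set.mem_univ x₀) (Set.mem_univ z)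
    simpa using this
  set g := fderiv ℝ f x₀ with hg
  clear_value g
  rcases eq_or_lt_of_le (norm_nonneg g) with h0 | hNpos
  · rw [← h0]
    have : (0:ℝ) ≤ 18 * M * h := by positivity
    linarith
  set N := ‖g‖ with hN
  -- Riesz representation
  set u := (InnerProductSpace.toDual ℝ (Euc d)).symm g with hu
  have hu_norm : ‖u‖ = N := (InnerProductSpace.toDual ℝ (Euc d)).symm.norm_map g
  have hgu : g u = N ^ 2 := by
    have h1 : (inner ℝ u u : ℝ) = g u := InnerProductSpace.toDual_symm_apply
    have h2 : (inner ℝ u u : ℝ) = ‖u‖ ^ 2 := real_inner_self_eq_norm_sq u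
    rw [← h1, h2, hu_norm]
  set x : Euc d := x₀ - (4 * h / N) • u with hx
  have hgx : g (x - x₀) = -(4 * h * N) := by
    have : x - x₀ = -((4 * h / N) • u) := by rw [hx]; abel
    rw [this, map_neg, map_smul, smul_eq_mul, hgu]
    field_simp
  have hxx0 : ‖x - x₀‖ = 4 * h := by
    have : x - x₀ = -((4 * h / N) • u) := by rw [hx]; abel
    rw [this, norm_neg, norm_smul, hu_norm, Real.norm_eq_abs,
      abs_of_pos (by positivity)]
    field_simp
  -- pick a point of G near x
  obtain ⟨y, hyG, hyx⟩ := (Metric.infDist_lt_iff ⟨x₀, hx₀⟩).mp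
    (lt_of_le_of_lt (hG x) (by linarith : h < 2 * h))
  have hyxnorm : ‖y - x‖ < 2 * h := by
    rw [← dist_eq_norm, dist_comm]; exact hyx
  have hyx0 : ‖y - x₀‖ ≤ 6 * h := by
    calc ‖y - x₀‖ = ‖(y - x) + (x - x₀)‖ := by rw [sub_add_sub_cancel]
      _ ≤ ‖y - x‖ + ‖x - x₀‖ := norm_add_le _ _
      _ ≤ 2 * h + 4 * h := by rw [hxx0]; linarith
      _ = 6 * h := by ring
  -- Taylor estimate on the closed ball of radius 6h
  have taylor : ‖f y - f x₀ - g (y - x₀)‖ ≤ M * (6 * h) * ‖y - x₀‖ := by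
    refine (convex_closedBall x₀ (6 * h)).norm_image_sub_le_of_norm_fderiv_le'
      (fun z _ => (hfd z)) (fun z hz => ?_) (mem_closedBall_self (by positivity)) ?_
    · refine le_trans (lip z) (mul_le_mul_of_nonneg_left ?_ hMnn)
      rw [mem_closedBall, dist_eq_norm] at hz
      exact hz
    · rw [mem_closedBall, dist_eq_norm]; exact hyx0
  have taylor' : ‖f y - f x₀ - g (y - x₀)‖ ≤ 36 * M * h ^ 2 := by
    calc ‖f y - f x₀ - g (y - x₀)‖ ≤ M * (6 * h) * ‖y - x₀‖ := taylor
      _ ≤ M * (6 * h) * (6 * h) :=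
        mul_le_mul_of_nonneg_left hyx0 (by positivity)
      _ = 36 * M * h ^ 2 := by ring
  have hlow : -(36 * M * h ^ 2) ≤ g (y - x₀) := by
    have h1 : f y - f x₀ - g (y - x₀) ≤ 36 * M * h ^ 2 := by
      have := (abs_le.mp (by rwa [Real.norm_eq_abs] at taylor')).2
      exact this
    have hfy : 0 ≤ f y := hfG y hyG
    linarith [h1, hfx₀ ▸ hfy]
  have hupper : g (y - x₀) ≤ -(2 * h * N) := by
    have split : g (y - x₀) = g (y - x) + g (x - x₀) := by
      rw [← map_add]; congr 1; abel
    have hbd : g (y - x) ≤ N * ‖y - x‖ :=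
      le_trans (le_abs_self _) (by rw [← Real.norm_eq_abs]; exact g.le_opNorm _)
    have h2 : g (y - x) ≤ N * (2 * h) :=
      le_trans hbd (mul_le_mul_of_nonneg_left hyxnorm.le hNpos.le)
    rw [split, hgx]
    linarith
  have key : 2 * h * N ≤ 36 * M * h ^ 2 := by linarith
  have : N ≤ 18 * M * h := by nlinarith [hhpos]
  linarith
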